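/- Let T ≥ 1 be an integer, let G, D > 0, let A ≥ 1 and 0 ≤ V ≤ G²D²T, let R be a real number, and set N = ⌈(log₂ T)/2⌉ and η_i = 2^{−i}/(5GD) for i = 0,…,N. If R ≤ η_i V + A/η_i for every i ∈ {0,…,N}, then R ≤ 3√(V·A) + 10GD·A. -/

import Mathlib

theorem grid_tuning
    (T : ℕ) (hT : 1 ≤ T) (G D : ℝ) (hG : 0 < G) (hD : 0 < D)
    (A V R : ℝ) (hA : 1 ≤ A) (hV0 : 0 ≤ V) (hV : V ≤ G^2 * D^2 * T)
    (N : ℕ) (hN : N = ⌈Real.logb 2 T / 2⌉₊)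
    (η : ℕ → ℝ) (hη : ∀ i, η i = (2 : ℝ)^(-(i : ℤ)) / (5 * G * D))
    (hR : ∀ i ≤ N, R ≤ η i * V + A / η i) :
    R ≤ 3 * Real.sqrt (V * A) + 10 * G * D * A := by
  have hGD : (0:ℝ) < 5*G*D := by positivity
  have hA0 : (0:ℝ) < A := by linarith
  by_cases hcase : V ≤ 25*G^2*D^2*A
  · -- use i = 0
    have h0 := hR 0 (Nat.zero_le _)
    rw [hη] at h0
    have e0 : (2:ℝ)^(-(0:ℕ):ℤ) = 1 := by norm_num
    rw [e0] at h0
    have e1 : (1:ℝ)/(5*G*D)*V = V/(5*G*D) := by ring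
    have e2 : A/((1:ℝ)/(5*G*D)) = A*(5*G*D) := by field_simp
    rw [e1, e2] at h0
    have hdiv : V/(5*G*D) ≤ 5*G*D*A := (div_le_iff₀ hGD).mpr (by nlinarith)
    have hsq : 0 ≤ Real.sqrt (V*A) := Real.sqrt_nonneg _
    nlinarith
  · push_neg at hcase
    have hVpos : 0 < V := by
      have h25 : 0 < 25*G^2*D^2*A := by positivity
      linarith
    set sv := Real.sqrt V with hsvdef
    set sa := Real.sqrt A with hsadef
    have hsv : sv^2 = V := Real.sq_sqrt hV0
    have hsa : sa^2 = A := Real.sq_sqrt (by linarith)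
    have hsvpos : 0 < sv := Real.sqrt_pos.mpr hVpos
    have hsapos : 0 < sa := Real.sqrt_pos.mpr hA0
    have hsa1 : 1 ≤ sa := by
      have := Real.sqrt_le_sqrt hA
      rwa [Real.sqrt_one] at this
    have hVA : Real.sqrt (V*A) = sv*sa := Real.sqrt_mul hV0 A
    set c := sv/sa/(5*G*D) with hcdef
    have hcpos : 0 < c := by positivity
    have hsvgt : 5*G*D*sa < sv := by
      have h := Real.sqrt_lt_sqrt (by positivity) hcase
      rwa [show 25*G^2*D^2*A = (5*G*D)^2*A by ring, Real.sqrt_mul (sq_nonneg _),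
        Real.sqrt_sq (by positivity)] at h
    have hc1 : 1 ≤ c := by
      rw [hcdef, le_div_iff₀ hGD, one_mul, le_div_iff₀ hsapos]
      linarith
    set i := ⌈Real.logb 2 c⌉₊ with hidef
    have hlogc0 : 0 ≤ Real.logb 2 c := Real.logb_nonneg one_lt_two hc1
    have hle : Real.logb 2 c ≤ (i:ℝ) := Nat.le_ceil _
    have hlt : (i:ℝ) < Real.logb 2 c + 1 := Nat.ceil_lt_add_one hlogc0
    have h2c : (2:ℝ)^(Real.logb 2 c) = c := Real.rpow_logb two_pos (by norm_num) hcpos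
    have hci : c ≤ (2:ℝ)^i := by
      calc c = (2:ℝ)^(Real.logb 2 c) := h2c.symm
        _ ≤ (2:ℝ)^((i:ℝ)) := Real.rpow_le_rpow_of_exponent_le one_le_two hle
        _ = (2:ℝ)^i := Real.rpow_natCast 2 i
    have h2i : (2:ℝ)^i ≤ 2*c := by
      have h := Real.rpow_le_rpow_of_exponent_le (x := 2) one_le_two hlt.le
      rw [Real.rpow_add two_pos, h2c, Real.rpow_one] at h
      calc (2:ℝ)^i = (2:ℝ)^((i:ℝ)) := (Real.rpow_natCast 2 i).symm
        _ ≤ c * 2 := h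
        _ = 2*c := by ring
    -- i ≤ N
    have hTpos : (0:ℝ) < T := by exact_mod_cast Nat.lt_of_lt_of_le Nat.zero_lt_one hT
    have hsqT : Real.sqrt T ≤ (2:ℝ)^(N:ℝ) := by
      have hle' : Real.logb 2 T / 2 ≤ (N:ℝ) := by
        rw [hN]; exact Nat.le_ceil _
      have h1 : Real.sqrt T = (2:ℝ)^(Real.logb 2 T / 2) := by
        rw [Real.sqrt_eq_rpow, show Real.logb 2 (T:ℝ) / 2 = Real.logb 2 (T:ℝ) * (1/2) by ring,
          Real.rpow_mul (by norm_num), Real.rpow_logb two_pos (by norm_num) hTpos]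
      rw [h1]
      exact Real.rpow_le_rpow_of_exponent_le one_le_two hle'
    have hsvle : sv ≤ G*D*Real.sqrt T := by
      have h := Real.sqrt_le_sqrt hV
      rwa [show G^2*D^2*(T:ℝ) = (G*D)^2 * T by ring, Real.sqrt_mul (sq_nonneg _),
        Real.sqrt_sq (by positivity)] at h
    have hcN : c ≤ (2:ℝ)^(N:ℝ) := by
      have h1 : sv/sa ≤ sv := div_le_self hsvpos.le hsa1
      have h2 : c ≤ sv/(5*G*D) := by
        rw [hcdef]; exact div_le_div_of_nonneg_right h1 hGD.le
      have h3 : sv/(5*G*D) ≤ Real.sqrt T := by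
        rw [div_le_iff₀ hGD]
        nlinarith [Real.sqrt_nonneg (T:ℝ)]
      linarith
    have hiN : i ≤ N := by
      rw [hidef]
      apply Nat.ceil_le.mpr
      exact (Real.logb_le_iff_le_rpow one_lt_two hcpos).mpr hcN
    -- main bound
    have hRi := hR i hiN
    rw [hη] at hRi
    have hzpow : (2:ℝ)^(-(i:ℤ)) = ((2:ℝ)^i)⁻¹ := by
      rw [zpow_neg, zpow_natCast]
    rw [hzpow] at hRi
    have h2ipos : (0:ℝ) < (2:ℝ)^i := by positivity
    have e2 : A / (((2:ℝ)^i)⁻¹/(5*G*D)) = A * (5*G*D) * (2:ℝ)^i := by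
      field_simp
    have e1 : ((2:ℝ)^i)⁻¹/(5*G*D) * V = V / (5*G*D*(2:ℝ)^i) := by
      rw [eq_div_iff (by positivity)]
      field_simp
    rw [e1, e2] at hRi
    have h5c : 5*G*D*c = sv/sa := by
      rw [hcdef]; field_simp
    have key1 : V/(5*G*D*(2:ℝ)^i) ≤ sv*sa := by
      have hstep : V/(5*G*D*(2:ℝ)^i) ≤ V/(5*G*D*c) := by
        gcongr
        all_goals first | exact hci | positivity
      have heq : V/(5*G*D*c) = sv*sa := by
        rw [h5c, div_div_eq_mul_div, div_eq_iff hsvpos.ne']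
        linear_combination (-sa) * hsv
      linarith
    have key2 : A*(5*G*D)*(2:ℝ)^i ≤ 2*(sv*sa) := by
      have hstep : A*(5*G*D)*(2:ℝ)^i ≤ A*(5*G*D)*(2*c) := by
        have hpos : 0 ≤ A*(5*G*D) := by positivity
        exact mul_le_mul_of_nonneg_left h2i hpos
      have heq : A*(5*G*D)*(2*c) = 2*(sv*sa) := by
        rw [hcdef]
        field_simp
        linear_combination (-1)*hsa
      linarith
    have hGDA : 0 ≤ 10*G*D*A := by positivity
    rw [hVA]
    linarith
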